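/- A permutation class C is splittable if and only if there exist permutations π, π' ∈ C such that every σ ∈ C admits a red-blue colouring of its points in which the red points avoid the pattern π and the blue points avoid the pattern π'. -/

import Mathlib

/-- A permutation of some finite length `n`, as a bijection of `Fin n`. -/
abbrev PPerm : Type := Σ n : ℕ, Equiv.Perm (Fin n)

/-- `Contains π σ` : the pattern `σ` occurs in (is contained in) `π`. -/
def Contains (π σ : PPerm) : Prop :=
  ∃ f : Fin σ.1 → Fin π.1, StrictMono f ∧
    ∀ i j, σ.2 i < σ.2 j ↔ π.2 (f i) < π.2 (f j)

/-- A permutation class: a set of permutations closed downwards under containment. -/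
def IsPermClass (C : Set PPerm) : Prop :=
  ∀ π ∈ C, ∀ σ : PPerm, Contains π σ → σ ∈ C

/-- `σ` is (exactly) the pattern of the set `S` of points of `π`. -/
def PatternOf (π : PPerm) (S : Set (Fin π.1)) (σ : PPerm) : Prop :=
  ∃ f : Fin σ.1 → Fin π.1, StrictMono f ∧ Set.range f = S ∧
    ∀ i j, σ.2 i < σ.2 j ↔ π.2 (f i) < π.2 (f j)

/-- The points of `π` lying in `S` contain an occurrence of `σ`. -/
def ContainsIn (π : PPerm) (S : Set (Fin π.1)) (σ : PPerm) : Prop :=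
  ∃ f : Fin σ.1 → Fin π.1, StrictMono f ∧ (∀ i, f i ∈ S) ∧
    ∀ i j, σ.2 i < σ.2 j ↔ π.2 (f i) < π.2 (f j)

/-- `π` is a merge of `σ` and `τ`: its points split into a part with pattern `σ`
and a part with pattern `τ`. -/
def IsMerge (π σ τ : PPerm) : Prop :=
  ∃ S : Set (Fin π.1), PatternOf π S σ ∧ PatternOf π Sᶜ τ

/-- Merge of two classes. -/
def MergeCl (C D : Set PPerm) : Set PPerm :=
  {π | ∃ σ ∈ C, ∃ τ ∈ D, IsMerge π σ τ}

/-- The empty permutation. -/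
def pempty : PPerm := ⟨0, 1⟩

/-- The singleton permutation `1`. -/
def pone : PPerm := ⟨1, 1⟩

/-- Iterated merge of a list of classes. -/
def MergeAll : List (Set PPerm) → Set PPerm
  | [] => {pempty}
  | [C] => C
  | C :: D :: Cs => MergeCl C (MergeAll (D :: Cs))

/-- A class is splittable if it is contained in the merge of finitely many
of its proper subclasses. -/
def Splittable (C : Set PPerm) : Prop :=
  ∃ Cs : List (Set PPerm), Cs ≠ [] ∧
    (∀ D ∈ Cs, IsPermClass D ∧ D ⊆ C ∧ D ≠ C) ∧ C ⊆ MergeAll Cs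

/-- A class is atomic if it is not the union of two proper subclasses. -/
def Atomic (C : Set PPerm) : Prop :=
  ¬ ∃ D E : Set PPerm, IsPermClass D ∧ IsPermClass E ∧
      D ⊆ C ∧ D ≠ C ∧ E ⊆ C ∧ E ≠ C ∧ C = D ∪ E

/-- Inflation `A[B]` of a class `A` by a class `B`: `π` decomposes into
consecutive nonempty blocks (given by the fibres of the monotone surjection `g`),
the relative order of distinct blocks follows `σ ∈ A`, and each block has its
pattern in `B`. -/
def Inflate (A B : Set PPerm) : Set PPerm :=
  {π | ∃ σ ∈ A, ∃ g : Fin π.1 → Fin σ.1, Monotone g ∧ Function.Surjective g ∧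
    (∀ p q, g p ≠ g q → (π.2 p < π.2 q ↔ σ.2 (g p) < σ.2 (g q))) ∧
    ∀ b : Fin σ.1, ∃ τ ∈ B, PatternOf π {p | g p = b} τ}

/-- Direct sum `σ ⊕ τ`. -/
def psum (σ τ : PPerm) : PPerm :=
  ⟨σ.1 + τ.1, finSumFinEquiv.permCongr (σ.2.sumCongr τ.2)⟩

/-- Skew sum `σ ⊖ τ`. -/
def pskew (σ τ : PPerm) : PPerm :=
  ⟨σ.1 + τ.1,
    finSumFinEquiv.symm.trans ((σ.2.sumCongr τ.2).trans
      ((Equiv.sumComm (Fin σ.1) (Fin τ.1)).trans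
        (finSumFinEquiv.trans (finCongr (Nat.add_comm τ.1 σ.1)))))⟩

/-- Sum-decomposable: a direct sum of two nonempty permutations. -/
def SumDecomp (π : PPerm) : Prop :=
  ∃ σ τ : PPerm, 0 < σ.1 ∧ 0 < τ.1 ∧ π = psum σ τ

/-- Skew-decomposable: a skew sum of two nonempty permutations. -/
def SkewDecomp (π : PPerm) : Prop :=
  ∃ σ τ : PPerm, 0 < σ.1 ∧ 0 < τ.1 ∧ π = pskew σ τ

def SumClosed (C : Set PPerm) : Prop := ∀ σ ∈ C, ∀ τ ∈ C, psum σ τ ∈ C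

def SkewClosed (C : Set PPerm) : Prop := ∀ σ ∈ C, ∀ τ ∈ C, pskew σ τ ∈ C

/-- The class of permutations avoiding the pattern `σ`. -/
def Av (σ : PPerm) : Set PPerm := {π | ¬ Contains π σ}

/-- The basis of a class: minimal permutations not belonging to it. -/
def PBasis (C : Set PPerm) : Set PPerm :=
  {π | π ∉ C ∧ ∀ σ : PPerm, Contains π σ → σ ≠ π → σ ∈ C}

/-- An interval of `π`: a set of points contiguous in positions and in values. -/
def IsInterval (π : PPerm) (S : Set (Fin π.1)) : Prop :=
  (∀ a ∈ S, ∀ b ∈ S, ∀ c, a ≤ c → c ≤ b → c ∈ S) ∧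
  (∀ a ∈ S, ∀ b ∈ S, ∀ c, π.2 a ≤ π.2 c → π.2 c ≤ π.2 b → c ∈ S)

/-- A simple permutation: its only intervals are the subsingletons and the whole. -/
def SimplePerm (π : PPerm) : Prop :=
  ∀ S : Set (Fin π.1), IsInterval π S → S.Subsingleton ∨ S = Set.univ

/-- Build a permutation from a function with an explicit inverse. -/
def mkP {n : ℕ} (f g : Fin n → Fin n)
    (h₁ : ∀ i, g (f i) = i) (h₂ : ∀ i, f (g i) = i) : PPerm :=
  ⟨n, ⟨f, g, h₁, h₂⟩⟩

def p12 : PPerm := ⟨2, 1⟩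
def p21 : PPerm := mkP ![1,0] ![1,0] (by decide) (by decide)
def p213 : PPerm := mkP ![1,0,2] ![1,0,2] (by decide) (by decide)
def p231 : PPerm := mkP ![1,2,0] ![2,0,1] (by decide) (by decide)
def p312 : PPerm := mkP ![2,0,1] ![1,2,0] (by decide) (by decide)
def p1234 : PPerm := ⟨4, 1⟩
def p2143 : PPerm := mkP ![1,0,3,2] ![1,0,3,2] (by decide) (by decide)
def p3412 : PPerm := mkP ![2,3,0,1] ![2,3,0,1] (by decide) (by decide)
def p4321 : PPerm := mkP ![3,2,1,0] ![3,2,1,0] (by decide) (by decide)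
def p2413 : PPerm := mkP ![1,3,0,2] ![2,0,3,1] (by decide) (by decide)
def p3142 : PPerm := mkP ![2,0,3,1] ![1,3,0,2] (by decide) (by decide)

/-- The class `I` of increasing permutations. -/
def IncCl : Set PPerm := Av p21
/-- The class `D` of decreasing permutations. -/
def DecCl : Set PPerm := Av p12
/-- The class `Av(213)`. -/
def Av213 : Set PPerm := Av p213
/-- The class `L = Av(231, 312)` of layered permutations. -/
def Layered : Set PPerm := Av p231 ∩ Av p312
/-- Separable permutations, characterised by avoidance of `2413` and `3142`. -/
def SepA : Set PPerm := Av p2413 ∩ Av p3142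
/-- Separable permutations avoiding every element of `F`. -/
def Avs (F : Set PPerm) : Set PPerm := {π ∈ SepA | ∀ τ ∈ F, ¬ Contains π τ}
/-- The class of separable permutations, defined as the smallest permutation class
containing `1` and closed under direct sums and skew sums. -/
def SepCl : Set PPerm :=
  ⋂₀ {C : Set PPerm | IsPermClass C ∧ pone ∈ C ∧
      ∀ σ ∈ C, ∀ τ ∈ C, psum σ τ ∈ C ∧ pskew σ τ ∈ C}
lemma contains_refl (π : PPerm) : Contains π π :=
  ⟨id, strictMono_id, fun _ _ => Iff.rfl⟩

lemma contains_trans {π σ τ : PPerm} (h1 : Contains π σ) (h2 : Contains σ τ) :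
    Contains π τ := by
  obtain ⟨f, hf, hfp⟩ := h1
  obtain ⟨g, hg, hgp⟩ := h2
  exact ⟨f ∘ g, hf.comp hg, fun i j => (hgp i j).trans (hfp _ _)⟩

lemma av_isPermClass (π : PPerm) : IsPermClass (Av π) :=
  fun ρ hρ σ hc hcon => hρ (contains_trans hc hcon)

lemma patternOf_contains {σ τ : PPerm} {S : Set (Fin σ.1)} (h : PatternOf σ S τ) :
    Contains σ τ := by
  obtain ⟨f, hf, _, hcond⟩ := h
  exact ⟨f, hf, hcond⟩

lemma exists_patternOf (σ : PPerm) (S : Set (Fin σ.1)) : ∃ τ : PPerm, PatternOf σ S τ := by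
  classical
  set F : Finset (Fin σ.1) := (Set.toFinite S).toFinset with hF
  let e : Fin F.card ≃o F := F.orderIsoOfFin rfl
  set V : Finset (Fin σ.1) := F.image σ.2 with hVdef
  have hV : V.card = F.card := Finset.card_image_of_injective F σ.2.injective
  let e' : Fin F.card ≃o V := V.orderIsoOfFin hV
  let p : Fin F.card → Fin F.card := fun i =>
    e'.symm ⟨σ.2 (e i), Finset.mem_image_of_mem _ (e i).2⟩
  have hinj : Function.Injective p := by
    intro i j hij
    have h2 : (⟨σ.2 (e i), Finset.mem_image_of_mem _ (e i).2⟩ : V)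
        = ⟨σ.2 (e j), Finset.mem_image_of_mem _ (e j).2⟩ := e'.symm.injective hij
    have h3 : σ.2 (e i) = σ.2 (e j) := congrArg Subtype.val h2
    have h4 : (e i : Fin σ.1) = e j := σ.2.injective h3
    exact e.injective (Subtype.ext h4)
  refine ⟨⟨F.card, Equiv.ofBijective p (Finite.injective_iff_bijective.mp hinj)⟩,
    fun i => (e i : Fin σ.1), ?_, ?_, ?_⟩
  · intro i j hij
    exact Subtype.coe_lt_coe.mpr (e.strictMono hij)
  · ext x
    constructor
    · rintro ⟨i, rfl⟩
      exact (Set.Finite.mem_toFinset _).mp (e i).2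
    · intro hx
      have hx' : x ∈ F := (Set.Finite.mem_toFinset _).mpr hx
      exact ⟨e.symm ⟨x, hx'⟩, congrArg Subtype.val (e.apply_symm_apply ⟨x, hx'⟩)⟩
  · intro i j
    show p i < p j ↔ _
    rw [e'.symm.lt_iff_lt, Subtype.mk_lt_mk]

lemma containsIn_iff {σ τ : PPerm} {S : Set (Fin σ.1)} (h : PatternOf σ S τ) (π : PPerm) :
    ContainsIn σ S π ↔ Contains τ π := by
  obtain ⟨e, he, hrange, hcond⟩ := h
  constructor
  · rintro ⟨f, hf, hmem, hc⟩
    have hex : ∀ i, ∃ j, e j = f i := by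
      intro i; have := hmem i; rw [← hrange] at this; exact this
    choose g hg using hex
    refine ⟨g, ?_, ?_⟩
    · intro i j hij
      have : e (g i) < e (g j) := by rw [hg, hg]; exact hf hij
      exact he.lt_iff_lt.mp this
    · intro i j
      rw [hc i j, ← hg i, ← hg j, ← hcond]
  · rintro ⟨g, hg, hc⟩
    refine ⟨e ∘ g, he.comp hg, fun i => hrange ▸ Set.mem_range_self (g i),
      fun i j => (hc i j).trans (hcond _ _)⟩

lemma mergeCl_isPermClass {D E : Set PPerm} (hD : IsPermClass D) (hE : IsPermClass E) :
    IsPermClass (MergeCl D E) := by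
  rintro π ⟨σ, hσ, τ, hτ, S, hS, hSc⟩ ρ ⟨f, hf, hc⟩
  obtain ⟨τ₁, hτ₁⟩ := exists_patternOf ρ (f ⁻¹' S)
  obtain ⟨τ₂, hτ₂⟩ := exists_patternOf ρ (f ⁻¹' S)ᶜ
  obtain ⟨e₁, he₁, hr₁, hc₁⟩ := hτ₁
  obtain ⟨e₂, he₂, hr₂, hc₂⟩ := hτ₂
  refine ⟨τ₁, ?_, τ₂, ?_, f ⁻¹' S, ⟨e₁, he₁, hr₁, hc₁⟩, ⟨e₂, he₂, hr₂, hc₂⟩⟩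
  · refine hD σ hσ τ₁ ((containsIn_iff hS τ₁).mp ?_)
    refine ⟨f ∘ e₁, hf.comp he₁, ?_, fun i j => (hc₁ i j).trans (hc _ _)⟩
    intro i
    have : e₁ i ∈ f ⁻¹' S := hr₁ ▸ Set.mem_range_self i
    exact this
  · refine hE τ hτ τ₂ ((containsIn_iff hSc τ₂).mp ?_)
    refine ⟨f ∘ e₂, hf.comp he₂, ?_, fun i j => (hc₂ i j).trans (hc _ _)⟩
    intro i
    have : e₂ i ∈ (f ⁻¹' S)ᶜ := hr₂ ▸ Set.mem_range_self i
    exact this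

lemma mergeAll_isPermClass : ∀ l : List (Set PPerm), l ≠ [] →
    (∀ D ∈ l, IsPermClass D) → IsPermClass (MergeAll l) := by
  intro l
  induction l with
  | nil => intro h; exact absurd rfl h
  | cons C tail IH =>
    intro _ h
    cases tail with
    | nil => exact h C (by simp)
    | cons D rest =>
      exact mergeCl_isPermClass (h C (by simp))
        (IH (by simp) (fun E hE => h E (by simp [hE])))

lemma forward_main (C : Set PPerm) :
    ∀ l : List (Set PPerm), l ≠ [] →
      (∀ D ∈ l, IsPermClass D ∧ ∃ π ∈ C, D ⊆ Av π) →
      C ⊆ MergeAll l →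
      ∃ π ∈ C, ∃ π' ∈ C, ∀ σ ∈ C, ∃ S : Set (Fin σ.1),
        ¬ ContainsIn σ S π ∧ ¬ ContainsIn σ Sᶜ π' := by
  intro l
  induction l with
  | nil => intro h; exact absurd rfl h
  | cons C₁ tail IH =>
    intro _ h hsub
    obtain ⟨hC₁class, π₁, hπ₁C, hπ₁⟩ := h C₁ (by simp)
    cases tail with
    | nil =>
      exact absurd (contains_refl π₁) (hπ₁ (hsub hπ₁C))
    | cons C₂ rest =>
      by_cases hcc : C ⊆ MergeAll (C₂ :: rest)
      · exact IH (by simp) (fun E hE => h E (by simp [hE])) hcc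
      · rw [Set.not_subset] at hcc
        obtain ⟨δ, hδC, hδM⟩ := hcc
        have hM : IsPermClass (MergeAll (C₂ :: rest)) :=
          mergeAll_isPermClass _ (by simp) (fun E hE => (h E (by simp [hE])).1)
        refine ⟨π₁, hπ₁C, δ, hδC, fun σ hσ => ?_⟩
        obtain ⟨τ, hτ, τ', hτ', S, hS, hSc⟩ := hsub hσ
        refine ⟨S, ?_, ?_⟩
        · rw [containsIn_iff hS]
          exact hπ₁ hτ
        · rw [containsIn_iff hSc]
          intro hcon
          exact hδM (hM τ' hτ' δ hcon)

/-- A class `C` is splittable iff there are `π, π' ∈ C` such that every `σ ∈ C`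
has a red-blue colouring whose red points avoid `π` and blue points avoid `π'`. -/
theorem stmt2 (C : Set PPerm) (hC : IsPermClass C) :
    Splittable C ↔ ∃ π ∈ C, ∃ π' ∈ C, ∀ σ ∈ C, ∃ S : Set (Fin σ.1),
      ¬ ContainsIn σ S π ∧ ¬ ContainsIn σ Sᶜ π' := by
  constructor
  · rintro ⟨Cs, hne, hprop, hsub⟩
    refine forward_main C Cs hne (fun D hD => ?_) hsub
    obtain ⟨hclass, hDC, hDne⟩ := hprop D hD
    obtain ⟨π, hπC, hπD⟩ := Set.exists_of_ssubset (lt_of_le_of_ne hDC hDne)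
    refine ⟨hclass, π, hπC, fun t ht hcon => hπD (hclass t ht π hcon)⟩
  · rintro ⟨π, hπ, π', hπ', hcol⟩
    refine ⟨[C ∩ Av π, C ∩ Av π'], by simp, ?_, ?_⟩
    · intro D hD
      simp only [List.mem_cons, List.mem_singleton] at hD
      rcases hD with rfl | rfl | h
      · refine ⟨fun ρ hρ σ h => ⟨hC ρ hρ.1 σ h, av_isPermClass π ρ hρ.2 σ h⟩,
          Set.inter_subset_left, fun heq => ?_⟩
        have : π ∈ C ∩ Av π := by rw [heq]; exact hπ
        exact this.2 (contains_refl π)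
      · refine ⟨fun ρ hρ σ h => ⟨hC ρ hρ.1 σ h, av_isPermClass π' ρ hρ.2 σ h⟩,
          Set.inter_subset_left, fun heq => ?_⟩
        have : π' ∈ C ∩ Av π' := by rw [heq]; exact hπ'
        exact this.2 (contains_refl π')
      · exact absurd h List.not_mem_nil
    · intro σ hσ
      obtain ⟨S, hS, hSc⟩ := hcol σ hσ
      obtain ⟨τ, hτ⟩ := exists_patternOf σ S
      obtain ⟨τ', hτ'⟩ := exists_patternOf σ Sᶜ
      exact ⟨τ, ⟨hC σ hσ τ (patternOf_contains hτ), fun h => hS ((containsIn_iff hτ π).mpr h)⟩,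
        τ', ⟨hC σ hσ τ' (patternOf_contains hτ'), fun h => hSc ((containsIn_iff hτ' π').mpr h)⟩,
        S, (by exact hτ), (by exact hτ')⟩
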